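/- Fix 0 < p ≤ 1, let n ≥ 1, let A ⊆ C_n be a nonempty subset, let ε > 0, and let k = ⌈64n/ε²⌉. Let (x_1, l_1), ..., (x_k, l_k) be independent random pairs, where each x_i is uniform on C_n and each l_i ∈ {0,1}^n has independent Bernoulli(p) coordinates, with all x_i and l_i mutually independent. Let α = (1/k) Σ_{i=1}^k d_{l_i}(x_i, A). Then with probability at least 0.9 one has |Δ(A,p) − α| ≤ ε. -/

import Mathlib

/-- The randomized Hamming distance `d_l(x,y) = Σ_{i : x i ≠ y i} l i`, where the coordinates
with `l i = 1` are the ones that are counted. -/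
def dl {ι : Type*} [Fintype ι] (l x y : ι → Bool) : ℕ :=
  (Finset.univ.filter fun i => x i ≠ y i ∧ l i = true).card

/-- The randomized Hamming distance from a point `x` to a subset `A`:
`d_l(x,A) = min_{y ∈ A} d_l(x,y)`. -/
noncomputable def dlToSet {ι : Type*} [Fintype ι] (l x : ι → Bool) (A : Set (ι → Bool)) : ℕ :=
  sInf ((fun y => dl l x y) '' A)

/-- The probability `p^{|l|}(1-p)^{n-|l|}` of the vector `l` of `n` independent
Bernoulli(p) coordinates. -/
noncomputable def bernWeight {ι : Type*} [Fintype ι] (p : ℝ) (l : ι → Bool) : ℝ :=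
  p ^ (Finset.univ.filter fun i => l i = true).card *
    (1 - p) ^ (Finset.univ.filter fun i => l i = false).card

/-- `Δ(A,p)`: the expectation of `d_l(x,A)` when `x` is uniform on the cube and `l` has
independent Bernoulli(p) coordinates. -/
noncomputable def avgDistP {ι : Type*} [Fintype ι] [DecidableEq ι] (p : ℝ)
    (A : Set (ι → Bool)) : ℝ :=
  ∑ l : ι → Bool, ∑ x : ι → Bool,
    (bernWeight p l / 2 ^ Fintype.card ι) * (dlToSet l x A : ℝ)

set_option linter.unusedSectionVars false
set_option linter.unusedTactic false
set_option linter.unnecessarySeqFocus false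
set_option linter.deprecated false

open Finset Function

section Tensor
variable {ι : Type*} [Fintype ι] [DecidableEq ι] (w : ι → Bool → ℝ)

/-- Product weight. -/
def Wt (v : ι → Bool) : ℝ := ∏ i, w i (v i)

/-- Expectation under the product weight. -/
noncomputable def Ex (f : (ι → Bool) → ℝ) : ℝ := ∑ v, Wt w v * f v

/-- Averaging over coordinate `i`. -/
def Tav (i : ι) (f : (ι → Bool) → ℝ) : (ι → Bool) → ℝ :=
  fun v => w i false * f (Function.update v i false) + w i true * f (Function.update v i true)

lemma Wt_nonneg (hw0 : ∀ i b, 0 ≤ w i b) (v : ι → Bool) : 0 ≤ Wt w v :=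
  Finset.prod_nonneg fun i _ => hw0 i (v i)

lemma sum_Wt (hw1 : ∀ i, w i false + w i true = 1) : ∑ v : ι → Bool, Wt w v = 1 := by
  classical
  have h := Finset.prod_univ_sum (fun _ : ι => (Finset.univ : Finset Bool)) (fun i b => w i b)
  rw [Fintype.piFinset_univ] at h
  simp only [Wt]
  rw [← h]
  rw [Finset.prod_eq_one]
  intro i _
  rw [Fintype.sum_bool]
  rw [add_comm]
  exact hw1 i

lemma fiber_sum (i : ι) (c b : Bool) (g : (ι → Bool) → ℝ) :
    ∑ v ∈ Finset.univ.filter (fun v => v i = c), g (Function.update v i b)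
      = ∑ u ∈ Finset.univ.filter (fun v => v i = b), g u := by
  classical
  refine Finset.sum_nbij' (fun v => Function.update v i b) (fun u => Function.update u i c)
    ?_ ?_ ?_ ?_ ?_
  · intro a _; simp
  · intro a _; simp
  · intro a ha
    simp only [Finset.mem_filter, Finset.mem_univ, true_and] at ha
    show Function.update (Function.update a i b) i c = a
    rw [Function.update_idem, ← ha, Function.update_eq_self]
  · intro a ha
    simp only [Finset.mem_filter, Finset.mem_univ, true_and] at ha
    show Function.update (Function.update a i c) i b = a
    rw [Function.update_idem, ← ha, Function.update_eq_self]
  · intro a _; rfl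

lemma Ex_Tav (hw1 : ∀ i, w i false + w i true = 1) (i : ι) (F : (ι → Bool) → ℝ) : Ex w (Tav w i F) = Ex w F := by
  classical
  have hR : ∀ (v : ι → Bool) (b : Bool),
      (∏ j ∈ Finset.univ.erase i, w j (Function.update v i b j))
        = ∏ j ∈ Finset.univ.erase i, w j (v j) := by
    intro v b
    refine Finset.prod_congr rfl fun j hj => ?_
    rw [Function.update_of_ne (Finset.ne_of_mem_erase hj)]
  have hW : ∀ v : ι → Bool, Wt w v = w i (v i) * ∏ j ∈ Finset.univ.erase i, w j (v j) :=
    fun v => (Finset.mul_prod_erase Finset.univ _ (Finset.mem_univ i)).symm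
  have key : ∀ b : Bool, ∑ v : ι → Bool, Wt w v * (w i b * F (Function.update v i b))
      = ∑ v ∈ Finset.univ.filter (fun v => v i = b), Wt w v * F v := by
    intro b
    set g : (ι → Bool) → ℝ :=
      fun u => (∏ j ∈ Finset.univ.erase i, w j (u j)) * (w i b * F u) with hg
    have h1 : ∀ v : ι → Bool, Wt w v * (w i b * F (Function.update v i b))
        = w i (v i) * g (Function.update v i b) := by
      intro v
      rw [hW v, hg]
      simp only
      rw [hR v b]
      ring
    calc ∑ v : ι → Bool, Wt w v * (w i b * F (Function.update v i b))
        = ∑ v : ι → Bool, w i (v i) * g (Function.update v i b) := by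
          exact Finset.sum_congr rfl fun v _ => h1 v
      _ = ∑ v ∈ Finset.univ.filter (fun v => v i = true), w i (v i) * g (Function.update v i b)
          + ∑ v ∈ Finset.univ.filter (fun v => ¬(v i = true)), w i (v i) * g (Function.update v i b) := by
          rw [Finset.sum_filter_add_sum_filter_not]
      _ = w i true * ∑ v ∈ Finset.univ.filter (fun v => v i = true), g (Function.update v i b)
          + w i false * ∑ v ∈ Finset.univ.filter (fun v => v i = false), g (Function.update v i b) := by
          rw [Finset.mul_sum, Finset.mul_sum]
          congr 1
          · refine Finset.sum_congr rfl fun v hv => ?_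
            simp only [Finset.mem_filter] at hv
            rw [hv.2]
          · have : Finset.univ.filter (fun v : ι → Bool => ¬(v i = true))
                = Finset.univ.filter (fun v => v i = false) := by
              refine Finset.filter_congr fun v _ => by simp
            rw [this]
            refine Finset.sum_congr rfl fun v hv => ?_
            simp only [Finset.mem_filter] at hv
            rw [hv.2]
      _ = (w i true + w i false) * ∑ u ∈ Finset.univ.filter (fun v => v i = b), g u := by
          rw [fiber_sum, fiber_sum]; ring
      _ = ∑ u ∈ Finset.univ.filter (fun v => v i = b), g u := by
          rw [add_comm, hw1 i, one_mul]
      _ = ∑ v ∈ Finset.univ.filter (fun v => v i = b), Wt w v * F v := by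
          refine Finset.sum_congr rfl fun v hv => ?_
          simp only [Finset.mem_filter] at hv
          rw [hg]; simp only
          rw [hW v, hv.2]; ring
  calc Ex w (Tav w i F)
      = ∑ v : ι → Bool, (Wt w v * (w i false * F (Function.update v i false))
          + Wt w v * (w i true * F (Function.update v i true))) := by
        refine Finset.sum_congr rfl fun v _ => ?_
        rw [Tav]; ring
    _ = ∑ v : ι → Bool, Wt w v * (w i false * F (Function.update v i false))
        + ∑ v : ι → Bool, Wt w v * (w i true * F (Function.update v i true)) :=
        Finset.sum_add_distrib
    _ = ∑ v ∈ Finset.univ.filter (fun v => v i = false), Wt w v * F v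
        + ∑ v ∈ Finset.univ.filter (fun v => v i = true), Wt w v * F v := by
        rw [key false, key true]
    _ = Ex w F := by
        rw [Ex, ← Finset.sum_filter_add_sum_filter_not Finset.univ (fun v => v i = false)]
        congr 1
        refine Finset.sum_congr (Finset.filter_congr fun v _ => by simp) fun v _ => rfl

/-- Bounded differences. -/
def bdd (f : (ι → Bool) → ℝ) : Prop :=
  ∀ (j : ι) (v : ι → Bool), |f (Function.update v j true) - f (Function.update v j false)| ≤ 1

/-- Independence of a coordinate. -/
def indepC (f : (ι → Bool) → ℝ) (i : ι) : Prop :=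
  ∀ (v : ι → Bool) (b : Bool), f (Function.update v i b) = f v

lemma Tav_sq_sub (hw1 : ∀ i, w i false + w i true = 1) (i : ι) (f : (ι → Bool) → ℝ)
    (v : ι → Bool) :
    Tav w i (fun u => f u ^ 2) v - (Tav w i f v) ^ 2
      = w i false * w i true
          * (f (Function.update v i false) - f (Function.update v i true)) ^ 2 := by
  have hb : w i true = 1 - w i false := by linarith [hw1 i]
  simp only [Tav]
  rw [hb]; ring

lemma bdd_Tav (hw0 : ∀ i b, 0 ≤ w i b) (hw1 : ∀ i, w i false + w i true = 1)
    (i : ι) {f : (ι → Bool) → ℝ} (hf : bdd f) : bdd (Tav w i f) := by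
  intro j v
  by_cases hij : j = i
  · subst hij
    simp only [Tav, Function.update_idem]
    simp
  · have hcomm : ∀ b c : Bool, Function.update (Function.update v j b) i c
        = Function.update (Function.update v i c) j b := fun b c =>
      Function.update_comm hij b c v
    simp only [Tav, hcomm]
    have h1 := hf j (Function.update v i false)
    have h2 := hf j (Function.update v i true)
    have e : w i false * f (Function.update (Function.update v i false) j true)
        + w i true * f (Function.update (Function.update v i true) j true)
        - (w i false * f (Function.update (Function.update v i false) j false)
          + w i true * f (Function.update (Function.update v i true) j false))
        = w i false * (f (Function.update (Function.update v i false) j true)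
            - f (Function.update (Function.update v i false) j false))
          + w i true * (f (Function.update (Function.update v i true) j true)
            - f (Function.update (Function.update v i true) j false)) := by ring
    rw [e]
    calc |_| ≤ |w i false * (f (Function.update (Function.update v i false) j true)
            - f (Function.update (Function.update v i false) j false))|
          + |w i true * (f (Function.update (Function.update v i true) j true)
            - f (Function.update (Function.update v i true) j false))| := abs_add_le _ _
      _ ≤ w i false * 1 + w i true * 1 := by
          rw [abs_mul, abs_mul, abs_of_nonneg (hw0 i false), abs_of_nonneg (hw0 i true)]
          exact add_le_add (mul_le_mul_of_nonneg_left h1 (hw0 i false))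
            (mul_le_mul_of_nonneg_left h2 (hw0 i true))
      _ = 1 := by rw [mul_one, mul_one]; exact hw1 i

lemma indepC_Tav_self (i : ι) (f : (ι → Bool) → ℝ) : indepC (Tav w i f) i := by
  intro v b
  simp only [Tav, Function.update_idem]

lemma indepC_Tav (i j : ι) (f : (ι → Bool) → ℝ) (h : indepC f j) : indepC (Tav w i f) j := by
  intro v b
  by_cases hij : i = j
  · subst hij; exact indepC_Tav_self w i f v b
  · have hji : j ≠ i := fun e => hij e.symm
    simp only [Tav]
    rw [Function.update_comm hji, Function.update_comm hji, h, h]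

/-- Iterated averaging along a list of coordinates. -/
def TavL (L : List ι) (f : (ι → Bool) → ℝ) : (ι → Bool) → ℝ :=
  L.foldr (fun i g => Tav w i g) f

lemma TavL_nil (f : (ι → Bool) → ℝ) : TavL w [] f = f := rfl

lemma TavL_cons (i : ι) (L : List ι) (f : (ι → Bool) → ℝ) :
    TavL w (i :: L) f = Tav w i (TavL w L f) := rfl

lemma Ex_TavL (hw1 : ∀ i, w i false + w i true = 1) (L : List ι) (f : (ι → Bool) → ℝ) :
    Ex w (TavL w L f) = Ex w f := by
  induction L with
  | nil => rfl
  | cons i L ih => rw [TavL_cons, Ex_Tav w hw1, ih]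

lemma bdd_TavL (hw0 : ∀ i b, 0 ≤ w i b) (hw1 : ∀ i, w i false + w i true = 1)
    (L : List ι) {f : (ι → Bool) → ℝ} (hf : bdd f) : bdd (TavL w L f) := by
  induction L with
  | nil => exact hf
  | cons i L ih => exact bdd_Tav w hw0 hw1 i ih

lemma indepC_TavL (L : List ι) (f : (ι → Bool) → ℝ) {j : ι} (hj : j ∈ L) :
    indepC (TavL w L f) j := by
  induction L with
  | nil => cases hj
  | cons i L ih =>
    rw [TavL_cons]
    rcases List.mem_cons.1 hj with h | h
    · subst h; exact indepC_Tav_self w j _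
    · exact indepC_Tav w i j _ (ih h)

lemma const_of_indepC (f : (ι → Bool) → ℝ) (h : ∀ j, indepC f j) (v v' : ι → Bool) :
    f v = f v' := by
  classical
  have key : ∀ s : Finset ι, f (s.piecewise v v') = f v' := by
    intro s
    induction s using Finset.induction_on with
    | empty => rw [Finset.piecewise_empty]
    | insert _ _ hnot ih =>
      rw [Finset.piecewise_insert, h _ _ _, ih]
  have := key Finset.univ
  rwa [Finset.piecewise_univ] at this

lemma Ex_le_of_le (hw0 : ∀ i b, 0 ≤ w i b) (hw1 : ∀ i, w i false + w i true = 1)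
    {f : (ι → Bool) → ℝ} {c : ℝ} (h : ∀ v, f v ≤ c) : Ex w f ≤ c := by
  calc Ex w f ≤ ∑ v : ι → Bool, Wt w v * c := by
        refine Finset.sum_le_sum fun v _ => ?_
        exact mul_le_mul_of_nonneg_left (h v) (Wt_nonneg w hw0 v)
    _ = (∑ v : ι → Bool, Wt w v) * c := by rw [Finset.sum_mul]
    _ = c := by rw [sum_Wt w hw1, one_mul]

lemma Ex_sub (f g : (ι → Bool) → ℝ) : Ex w f - Ex w g = Ex w (fun v => f v - g v) := by
  simp only [Ex, ← Finset.sum_sub_distrib]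
  exact Finset.sum_congr rfl fun v _ => by ring

lemma efron_stein_aux (hw0 : ∀ i b, 0 ≤ w i b) (hw1 : ∀ i, w i false + w i true = 1)
    (L : List ι) (f : (ι → Bool) → ℝ) (hf : bdd f) :
    Ex w (fun v => f v ^ 2) - Ex w (fun v => TavL w L f v ^ 2) ≤ (L.length : ℝ) / 4 := by
  induction L with
  | nil => simp [TavL_nil]
  | cons i L ih =>
    have hg : bdd (TavL w L f) := bdd_TavL w hw0 hw1 L hf
    set g := TavL w L f with hgdef
    have step : Ex w (fun v => g v ^ 2) - Ex w (fun v => Tav w i g v ^ 2) ≤ 1 / 4 := by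
      have h1 : Ex w (fun v => g v ^ 2) = Ex w (Tav w i (fun v => g v ^ 2)) :=
        (Ex_Tav w hw1 i _).symm
      rw [h1, Ex_sub w]
      refine Ex_le_of_le w hw0 hw1 fun v => ?_
      rw [Tav_sq_sub w hw1 i g v]
      have hab : w i false * w i true ≤ 1 / 4 := by
        have h0 := hw0 i false
        have h1' := hw0 i true
        have hs := hw1 i
        nlinarith [sq_nonneg (w i false - w i true)]
      have hd : (g (Function.update v i false) - g (Function.update v i true)) ^ 2 ≤ 1 := by
        have := hg i v
        rw [abs_le] at this
        nlinarith [this.1, this.2]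
      calc w i false * w i true * (g (Function.update v i false) - g (Function.update v i true)) ^ 2
          ≤ (1 / 4) * 1 := by
            refine mul_le_mul hab hd (sq_nonneg _) (by norm_num)
        _ = 1 / 4 := by norm_num
    rw [TavL_cons]
    have : Ex w (fun v => f v ^ 2) - Ex w (fun v => Tav w i g v ^ 2)
        = (Ex w (fun v => f v ^ 2) - Ex w (fun v => g v ^ 2))
          + (Ex w (fun v => g v ^ 2) - Ex w (fun v => Tav w i g v ^ 2)) := by ring
    rw [this]
    have hlen : ((i :: L).length : ℝ) / 4 = (L.length : ℝ) / 4 + 1 / 4 := by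
      simp [List.length_cons]; push_cast; ring
    rw [hlen]
    exact add_le_add (ih) step

/-- Efron–Stein / tensorization variance bound for bounded-difference functions. -/
lemma efron_stein (hw0 : ∀ i b, 0 ≤ w i b) (hw1 : ∀ i, w i false + w i true = 1)
    (f : (ι → Bool) → ℝ) (hf : bdd f) :
    Ex w (fun v => (f v - Ex w f) ^ 2) ≤ (Fintype.card ι : ℝ) / 4 := by
  classical
  set L := (Finset.univ : Finset ι).toList with hL
  have hconst : ∀ v : ι → Bool, TavL w L f v = Ex w f := by
    have hind : ∀ j, indepC (TavL w L f) j := fun j =>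
      indepC_TavL w L f (Finset.mem_toList.2 (Finset.mem_univ j))
    intro v
    have hcv : ∀ v' : ι → Bool, TavL w L f v' = TavL w L f v := fun v' =>
      const_of_indepC (TavL w L f) hind v' v
    have : Ex w (TavL w L f) = TavL w L f v := by
      calc Ex w (TavL w L f) = ∑ v' : ι → Bool, Wt w v' * TavL w L f v := by
            exact Finset.sum_congr rfl fun v' _ => by rw [hcv v']
        _ = (∑ v' : ι → Bool, Wt w v') * TavL w L f v := by rw [Finset.sum_mul]
        _ = TavL w L f v := by rw [sum_Wt w hw1, one_mul]
    rw [← this, Ex_TavL w hw1]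
  have hmain := efron_stein_aux w hw0 hw1 L f hf
  have hLlen : (L.length : ℝ) = (Fintype.card ι : ℝ) := by
    rw [hL, Finset.length_toList]; simp
  have hTsq : Ex w (fun v => TavL w L f v ^ 2) = (Ex w f) ^ 2 := by
    calc Ex w (fun v => TavL w L f v ^ 2) = ∑ v : ι → Bool, Wt w v * (Ex w f) ^ 2 := by
          refine Finset.sum_congr rfl fun v _ => by simp only [hconst v]
      _ = (∑ v : ι → Bool, Wt w v) * (Ex w f) ^ 2 := by rw [Finset.sum_mul]
      _ = (Ex w f) ^ 2 := by rw [sum_Wt w hw1, one_mul]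
    
  have hexp : Ex w (fun v => (f v - Ex w f) ^ 2)
      = Ex w (fun v => f v ^ 2) - (Ex w f) ^ 2 := by
    set m := Ex w f with hm
    have expand : ∀ v : ι → Bool, Wt w v * (f v - m) ^ 2
        = Wt w v * f v ^ 2 - 2 * m * (Wt w v * f v) + m ^ 2 * Wt w v := fun v => by ring
    calc Ex w (fun v => (f v - m) ^ 2)
        = ∑ v : ι → Bool, (Wt w v * f v ^ 2 - 2 * m * (Wt w v * f v) + m ^ 2 * Wt w v) :=
          Finset.sum_congr rfl fun v _ => expand v
      _ = ((∑ v : ι → Bool, Wt w v * f v ^ 2) - 2 * m * ∑ v : ι → Bool, Wt w v * f v)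
          + m ^ 2 * ∑ v : ι → Bool, Wt w v := by
          rw [Finset.sum_add_distrib, Finset.sum_sub_distrib, ← Finset.mul_sum, ← Finset.mul_sum]
      _ = (Ex w (fun v => f v ^ 2) - 2 * m * m) + m ^ 2 * 1 := by
          rw [sum_Wt w hw1]; rfl
      _ = Ex w (fun v => f v ^ 2) - m ^ 2 := by ring
  rw [hexp, ← hTsq, ← hLlen]
  exact hmain

end Tensor


section Concrete
variable {ι : Type*} [Fintype ι] [DecidableEq ι]

lemma dlToSet_le_dl {A : Set (ι → Bool)} {y : ι → Bool} (hy : y ∈ A) (l x : ι → Bool) :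
    dlToSet l x A ≤ dl l x y :=
  Nat.sInf_le ⟨y, hy, rfl⟩

lemma dlToSet_attained {A : Set (ι → Bool)} (hA : A.Nonempty) (l x : ι → Bool) :
    ∃ y ∈ A, dl l x y = dlToSet l x A := by
  have h : ((fun y => dl l x y) '' A).Nonempty := hA.image _
  have := Nat.sInf_mem h
  obtain ⟨y, hy, hval⟩ := this
  exact ⟨y, hy, hval⟩

lemma dl_flip {l x l' x' : ι → Bool} {j : ι}
    (h : ∀ i, i ≠ j → x i = x' i ∧ l i = l' i) (y : ι → Bool) :
    dl l x y ≤ dl l' x' y + 1 := by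
  classical
  have hsub : (Finset.univ.filter fun i => x i ≠ y i ∧ l i = true)
      ⊆ insert j (Finset.univ.filter fun i => x' i ≠ y i ∧ l' i = true) := by
    intro i hi
    simp only [Finset.mem_filter, Finset.mem_univ, true_and] at hi
    by_cases hij : i = j
    · rw [hij]; exact Finset.mem_insert_self j _
    · refine Finset.mem_insert_of_mem ?_
      simp only [Finset.mem_filter, Finset.mem_univ, true_and]
      obtain ⟨hx, hl⟩ := h i hij
      exact ⟨by rw [← hx]; exact hi.1, by rw [← hl]; exact hi.2⟩
  calc dl l x y ≤ (insert j (Finset.univ.filter fun i => x' i ≠ y i ∧ l' i = true)).card :=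
        Finset.card_le_card hsub
    _ ≤ dl l' x' y + 1 := Finset.card_insert_le _ _

lemma dlToSet_flip {A : Set (ι → Bool)} (hA : A.Nonempty) {l x l' x' : ι → Bool} {j : ι}
    (h : ∀ i, i ≠ j → x i = x' i ∧ l i = l' i) :
    dlToSet l x A ≤ dlToSet l' x' A + 1 := by
  obtain ⟨y, hy, hval⟩ := dlToSet_attained hA l' x'
  calc dlToSet l x A ≤ dl l x y := dlToSet_le_dl hy l x
    _ ≤ dl l' x' y + 1 := dl_flip h y
    _ = dlToSet l' x' A + 1 := by rw [hval]

lemma bernWeight_eq_prod (p : ℝ) (l : ι → Bool) :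
    bernWeight p l = ∏ i, (if l i = true then p else 1 - p) := by
  classical
  rw [Finset.prod_ite (fun _ => p) (fun _ => 1 - p), Finset.prod_const, Finset.prod_const,
    bernWeight]
  congr 2
  refine congrArg Finset.card ?_
  exact Finset.filter_congr fun i _ => by cases l i <;> simp

end Concrete

section Bridge
variable {n : ℕ} (p : ℝ)

/-- Weights: uniform on `x`-coordinates (inl), Bernoulli(p) on `l`-coordinates (inr). -/
noncomputable def wB (n : ℕ) (p : ℝ) : (Fin n ⊕ Fin n) → Bool → ℝ := fun j b =>
  match j with
  | Sum.inl _ => (2 : ℝ)⁻¹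
  | Sum.inr _ => if b = true then p else 1 - p

lemma wB_nonneg (hp0 : 0 < p) (hp1 : p ≤ 1) : ∀ j b, 0 ≤ wB n p j b := by
  rintro (j | j) b
  · simp only [wB]; norm_num
  · simp only [wB]; split <;> linarith

lemma wB_sum : ∀ j, wB n p j false + wB n p j true = 1 := by
  rintro (j | j) <;> simp [wB] <;> norm_num

/-- The sample function on the tensor space. -/
noncomputable def phiF (n : ℕ) (A : Set (Fin n → Bool)) : ((Fin n ⊕ Fin n) → Bool) → ℝ :=
  fun v => (dlToSet (v ∘ Sum.inr) (v ∘ Sum.inl) A : ℝ)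

lemma comp_update_inl (v : (Fin n ⊕ Fin n) → Bool) (j : Fin n) (b : Bool) :
    (Function.update v (Sum.inl j) b) ∘ Sum.inl = Function.update (v ∘ Sum.inl) j b := by
  funext i
  by_cases h : i = j
  · subst h; simp
  · have : (Sum.inl i : Fin n ⊕ Fin n) ≠ Sum.inl j := fun e => h (Sum.inl.inj e)
    simp [Function.update_of_ne this, Function.update_of_ne h]

lemma comp_update_inl_inr (v : (Fin n ⊕ Fin n) → Bool) (j : Fin n) (b : Bool) :
    (Function.update v (Sum.inl j) b) ∘ Sum.inr = v ∘ Sum.inr := by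
  funext i
  exact Function.update_of_ne Sum.inr_ne_inl b v

lemma comp_update_inr (v : (Fin n ⊕ Fin n) → Bool) (j : Fin n) (b : Bool) :
    (Function.update v (Sum.inr j) b) ∘ Sum.inr = Function.update (v ∘ Sum.inr) j b := by
  funext i
  by_cases h : i = j
  · subst h; simp
  · have : (Sum.inr i : Fin n ⊕ Fin n) ≠ Sum.inr j := fun e => h (Sum.inr.inj e)
    simp [Function.update_of_ne this, Function.update_of_ne h]

lemma comp_update_inr_inl (v : (Fin n ⊕ Fin n) → Bool) (j : Fin n) (b : Bool) :
    (Function.update v (Sum.inr j) b) ∘ Sum.inl = v ∘ Sum.inl := by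
  funext i
  exact Function.update_of_ne Sum.inl_ne_inr b v

lemma abs_le_one_of_nat {a b : ℕ} (h1 : a ≤ b + 1) (h2 : b ≤ a + 1) :
    |(a : ℝ) - (b : ℝ)| ≤ 1 := by
  rw [abs_sub_le_iff]
  constructor
  · have : (a : ℝ) ≤ (b : ℝ) + 1 := by exact_mod_cast h1
    linarith
  · have : (b : ℝ) ≤ (a : ℝ) + 1 := by exact_mod_cast h2
    linarith

lemma bdd_phiF (A : Set (Fin n → Bool)) (hA : A.Nonempty) : bdd (phiF n A) := by
  rintro (j | j) v
  · -- x-coordinate flip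
    simp only [phiF, comp_update_inl, comp_update_inl_inr]
    have h1 : ∀ b c : Bool,
        dlToSet (v ∘ Sum.inr) (Function.update (v ∘ Sum.inl) j b) A
          ≤ dlToSet (v ∘ Sum.inr) (Function.update (v ∘ Sum.inl) j c) A + 1 := by
      intro b c
      refine dlToSet_flip hA (j := j) fun i hij => ⟨?_, rfl⟩
      rw [Function.update_of_ne hij, Function.update_of_ne hij]
    exact abs_le_one_of_nat (h1 true false) (h1 false true)
  · -- l-coordinate flip
    simp only [phiF, comp_update_inr, comp_update_inr_inl]
    have h1 : ∀ b c : Bool,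
        dlToSet (Function.update (v ∘ Sum.inr) j b) (v ∘ Sum.inl) A
          ≤ dlToSet (Function.update (v ∘ Sum.inr) j c) (v ∘ Sum.inl) A + 1 := by
      intro b c
      refine dlToSet_flip hA (j := j) fun i hij => ⟨rfl, ?_⟩
      rw [Function.update_of_ne hij, Function.update_of_ne hij]
    exact abs_le_one_of_nat (h1 true false) (h1 false true)

/-- Transfer lemma: expectation over the tensor space equals the double sum. -/
lemma transfer (G : (Fin n → Bool) → (Fin n → Bool) → ℝ) :
    Ex (wB n p) (fun v => G (v ∘ Sum.inl) (v ∘ Sum.inr))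
      = ∑ x : Fin n → Bool, ∑ l : Fin n → Bool, (bernWeight p l / 2 ^ n) * G x l := by
  classical
  have hWt : ∀ v : (Fin n ⊕ Fin n) → Bool,
      Wt (wB n p) v = bernWeight p (v ∘ Sum.inr) / 2 ^ n := by
    intro v
    rw [Wt, Fintype.prod_sum_type]
    have h1 : (∏ a : Fin n, wB n p (Sum.inl a) (v (Sum.inl a))) = ((2 : ℝ) ^ n)⁻¹ := by
      simp [wB, Finset.prod_const]
    have h2 : (∏ a : Fin n, wB n p (Sum.inr a) (v (Sum.inr a)))
        = bernWeight p (v ∘ Sum.inr) := by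
      rw [bernWeight_eq_prod]
      exact Finset.prod_congr rfl fun a _ => by simp [wB, Function.comp]
    rw [h1, h2]
    ring
  rw [Ex]
  rw [← Equiv.sum_comp (Equiv.sumArrowEquivProdArrow (Fin n) (Fin n) Bool).symm
    (fun v => Wt (wB n p) v * G (v ∘ Sum.inl) (v ∘ Sum.inr))]
  rw [Fintype.sum_prod_type]
  refine Finset.sum_congr rfl fun x _ => Finset.sum_congr rfl fun l _ => ?_
  have hv : ∀ i, ((Equiv.sumArrowEquivProdArrow (Fin n) (Fin n) Bool).symm (x, l)) i
      = Sum.elim x l i := fun i => by cases i <;> rfl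
  have hinl : ((Equiv.sumArrowEquivProdArrow (Fin n) (Fin n) Bool).symm (x, l)) ∘ Sum.inl = x := by
    funext i; exact hv (Sum.inl i)
  have hinr : ((Equiv.sumArrowEquivProdArrow (Fin n) (Fin n) Bool).symm (x, l)) ∘ Sum.inr = l := by
    funext i; exact hv (Sum.inr i)
  rw [hWt, hinl, hinr]

end Bridge

open Classical in
lemma cheb {Ω : Type*} [Fintype Ω] (π : Ω → ℝ) (hπ0 : ∀ a, 0 ≤ π a)
    (hπ1 : ∑ a : Ω, π a = 1) (Z : Ω → ℝ) (k : ℕ) (hkpos : 0 < k) (ε : ℝ) (hε : 0 < ε)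
    (μ V : ℝ) (hμ : ∑ a : Ω, π a * Z a = μ) (hV : ∑ a : Ω, π a * (Z a - μ) ^ 2 ≤ V)
    (hV0 : 0 ≤ V) :
    1 - V / (k * ε ^ 2) ≤
      ∑ ω : Fin k → Ω,
        if |μ - (k : ℝ)⁻¹ * ∑ i : Fin k, Z (ω i)| ≤ ε then ∏ i : Fin k, π (ω i) else 0 := by
  classical
  have hk0 : (0 : ℝ) < k := by exact_mod_cast hkpos
  have hkey : ∀ F : Fin k → Ω → ℝ,
      ∑ ω : Fin k → Ω, ∏ i, F i (ω i) = ∏ i, ∑ a : Ω, F i a := by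
    intro F
    have h := Finset.prod_univ_sum (fun _ : Fin k => (Finset.univ : Finset Ω)) F
    rw [Fintype.piFinset_univ] at h
    exact h.symm
  have hP0 : ∀ ω : Fin k → Ω, 0 ≤ ∏ i, π (ω i) :=
    fun ω => Finset.prod_nonneg fun i _ => hπ0 _
  have hPsum : ∑ ω : Fin k → Ω, ∏ i, π (ω i) = 1 := by
    have h := hkey (fun _ a => π a)
    beta_reduce at h
    rw [h, Finset.prod_const, hπ1, one_pow]
  -- marginal
  have hmarg : ∀ (i : Fin k) (q : Ω → ℝ),
      ∑ ω : Fin k → Ω, (∏ m, π (ω m)) * q (ω i) = ∑ a : Ω, π a * q a := by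
    intro i q
    have h1 : ∀ ω : Fin k → Ω, (∏ m, π (ω m)) * q (ω i)
        = ∏ m, (π (ω m) * if m = i then q (ω m) else 1) := by
      intro ω
      rw [Finset.prod_mul_distrib, Finset.prod_ite_eq' Finset.univ i (fun m => q (ω m))]
      simp
    have h2 := hkey (fun m a => π a * if m = i then q a else 1)
    beta_reduce at h2
    calc ∑ ω : Fin k → Ω, (∏ m, π (ω m)) * q (ω i)
        = ∑ ω : Fin k → Ω, ∏ m, (π (ω m) * if m = i then q (ω m) else 1) :=
          Finset.sum_congr rfl fun ω _ => h1 ω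
      _ = ∏ m, ∑ a : Ω, (π a * if m = i then q a else 1) := h2
      _ = ∏ m : Fin k, (if m = i then ∑ a : Ω, π a * q a else 1) := by
          refine Finset.prod_congr rfl fun m _ => ?_
          by_cases h : m = i
          · simp [h]
          · simp [h, hπ1]
      _ = ∑ a : Ω, π a * q a := by
          rw [Finset.prod_ite_eq' Finset.univ i (fun _ => ∑ a : Ω, π a * q a)]
          simp
  -- pair
  have hpair : ∀ (i j : Fin k), i ≠ j → ∀ (q r : Ω → ℝ),
      ∑ ω : Fin k → Ω, (∏ m, π (ω m)) * (q (ω i) * r (ω j))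
        = (∑ a : Ω, π a * q a) * (∑ a : Ω, π a * r a) := by
    intro i j hij q r
    have h1 : ∀ ω : Fin k → Ω, (∏ m, π (ω m)) * (q (ω i) * r (ω j))
        = ∏ m, (π (ω m) * ((if m = i then q (ω m) else 1) * (if m = j then r (ω m) else 1))) := by
      intro ω
      rw [Finset.prod_mul_distrib, Finset.prod_mul_distrib,
        Finset.prod_ite_eq' Finset.univ i (fun m => q (ω m)),
        Finset.prod_ite_eq' Finset.univ j (fun m => r (ω m))]
      simp
    have h2 := hkey (fun m a => π a * ((if m = i then q a else 1) * (if m = j then r a else 1)))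
    beta_reduce at h2
    have h3 : ∀ m : Fin k, (∑ a : Ω, π a * ((if m = i then q a else 1) * (if m = j then r a else 1)))
        = (if m = i then ∑ a : Ω, π a * q a else 1) * (if m = j then ∑ a : Ω, π a * r a else 1) := by
      intro m
      by_cases hmi : m = i
      · have hmj : m ≠ j := by rw [hmi]; exact hij
        simp [hmi, hmj, hij]
      · by_cases hmj : m = j
        · have hji : ¬ j = i := fun e => hij e.symm
          simp [hmi, hmj, hji]
        · simp [hmi, hmj, hπ1]
    calc ∑ ω : Fin k → Ω, (∏ m, π (ω m)) * (q (ω i) * r (ω j))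
        = ∑ ω : Fin k → Ω, ∏ m, (π (ω m) * ((if m = i then q (ω m) else 1)
            * (if m = j then r (ω m) else 1))) := Finset.sum_congr rfl fun ω _ => h1 ω
      _ = ∏ m, ∑ a : Ω, (π a * ((if m = i then q a else 1) * (if m = j then r a else 1))) := h2
      _ = ∏ m, ((if m = i then ∑ a : Ω, π a * q a else 1)
            * (if m = j then ∑ a : Ω, π a * r a else 1)) :=
          Finset.prod_congr rfl fun m _ => h3 m
      _ = (∑ a : Ω, π a * q a) * (∑ a : Ω, π a * r a) := by
          rw [Finset.prod_mul_distrib, Finset.prod_ite_eq' Finset.univ i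
            (fun _ => ∑ a : Ω, π a * q a), Finset.prod_ite_eq' Finset.univ j
            (fun _ => ∑ a : Ω, π a * r a)]
          simp
  have hcenter : ∑ a : Ω, π a * (Z a - μ) = 0 := by
    calc ∑ a : Ω, π a * (Z a - μ) = ∑ a : Ω, (π a * Z a - μ * π a) :=
          Finset.sum_congr rfl fun a _ => by ring
      _ = (∑ a : Ω, π a * Z a) - μ * ∑ a : Ω, π a := by
          rw [Finset.sum_sub_distrib, ← Finset.mul_sum]
      _ = 0 := by rw [hμ, hπ1]; ring
  -- variance of the sum
  have hsum2 : ∑ ω : Fin k → Ω, (∏ m, π (ω m)) * ((∑ i, Z (ω i)) - k * μ) ^ 2 ≤ k * V := by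
    have hSexp : ∀ ω : Fin k → Ω, (∑ i, Z (ω i)) - k * μ = ∑ i, (Z (ω i) - μ) := by
      intro ω
      rw [Finset.sum_sub_distrib, Finset.sum_const, Finset.card_univ, Fintype.card_fin,
        nsmul_eq_mul]
    have hterm : ∀ (i j : Fin k),
        ∑ ω : Fin k → Ω, (∏ m, π (ω m)) * ((Z (ω i) - μ) * (Z (ω j) - μ))
          = if i = j then ∑ a : Ω, π a * (Z a - μ) ^ 2 else 0 := by
      intro i j
      by_cases h : i = j
      · subst h
        rw [if_pos rfl]
        have := hmarg i (fun a => (Z a - μ) ^ 2)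
        beta_reduce at this
        rw [← this]
        exact Finset.sum_congr rfl fun ω _ => by ring
      · rw [if_neg h, hpair i j h (fun a => Z a - μ) (fun a => Z a - μ), hcenter, mul_zero]
    calc ∑ ω : Fin k → Ω, (∏ m, π (ω m)) * ((∑ i, Z (ω i)) - k * μ) ^ 2
        = ∑ ω : Fin k → Ω, ∑ i, ∑ j,
            (∏ m, π (ω m)) * ((Z (ω i) - μ) * (Z (ω j) - μ)) := by
          refine Finset.sum_congr rfl fun ω _ => ?_
          rw [hSexp ω, sq, Finset.sum_mul_sum, Finset.mul_sum]
          refine Finset.sum_congr rfl fun i _ => ?_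
          rw [Finset.mul_sum]
      _ = ∑ i, ∑ j, ∑ ω : Fin k → Ω,
            (∏ m, π (ω m)) * ((Z (ω i) - μ) * (Z (ω j) - μ)) := by
          rw [Finset.sum_comm]
          exact Finset.sum_congr rfl fun i _ => Finset.sum_comm
      _ = ∑ i : Fin k, ∑ j : Fin k, (if i = j then ∑ a : Ω, π a * (Z a - μ) ^ 2 else 0) := by
          exact Finset.sum_congr rfl fun i _ => Finset.sum_congr rfl fun j _ => hterm i j
      _ = ∑ i : Fin k, ∑ a : Ω, π a * (Z a - μ) ^ 2 := by
          refine Finset.sum_congr rfl fun i _ => ?_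
          rw [Finset.sum_ite_eq Finset.univ i (fun _ => ∑ a : Ω, π a * (Z a - μ) ^ 2)]
          simp
      _ ≤ ∑ i : Fin k, V := Finset.sum_le_sum fun i _ => hV
      _ = k * V := by rw [Finset.sum_const, Finset.card_univ, Fintype.card_fin, nsmul_eq_mul]
  -- Chebyshev
  have hbad : ∑ ω : Fin k → Ω,
      (if ¬ (|μ - (k : ℝ)⁻¹ * ∑ i, Z (ω i)| ≤ ε) then ∏ i, π (ω i) else 0)
        ≤ V / (k * ε ^ 2) := by
    have hkε : (0 : ℝ) < ((k : ℝ) * ε) ^ 2 := by positivity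
    have step : ∀ ω : Fin k → Ω,
        (if ¬ (|μ - (k : ℝ)⁻¹ * ∑ i, Z (ω i)| ≤ ε) then ∏ i, π (ω i) else 0) * ((k : ℝ) * ε) ^ 2
          ≤ (∏ m, π (ω m)) * ((∑ i, Z (ω i)) - k * μ) ^ 2 := by
      intro ω
      by_cases h : |μ - (k : ℝ)⁻¹ * ∑ i, Z (ω i)| ≤ ε
      · rw [if_neg (by exact fun h' => h' h), zero_mul]
        exact mul_nonneg (hP0 ω) (sq_nonneg _)
      · rw [if_pos h]
        push_neg at h
        have ht : ε ≤ |μ - (k : ℝ)⁻¹ * ∑ i, Z (ω i)| := le_of_lt h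
        have ht2 : ε ^ 2 ≤ (μ - (k : ℝ)⁻¹ * ∑ i, Z (ω i)) ^ 2 := by
          rw [← sq_abs (μ - _)]
          exact pow_le_pow_left₀ (le_of_lt hε) ht 2
        have hkt : (k : ℝ) * (μ - (k : ℝ)⁻¹ * ∑ i, Z (ω i)) = k * μ - ∑ i, Z (ω i) := by
          field_simp
        have ht3 : ((k : ℝ) * ε) ^ 2 ≤ ((∑ i, Z (ω i)) - k * μ) ^ 2 := by
          have h4 : ((∑ i, Z (ω i)) - k * μ) ^ 2
              = (k : ℝ) ^ 2 * (μ - (k : ℝ)⁻¹ * ∑ i, Z (ω i)) ^ 2 := by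
            rw [show ((∑ i, Z (ω i)) - k * μ) ^ 2 = (k * μ - ∑ i, Z (ω i)) ^ 2 by ring, ← hkt]
            ring
          rw [h4, mul_pow]
          exact mul_le_mul_of_nonneg_left ht2 (sq_nonneg _)
        calc (∏ i, π (ω i)) * ((k : ℝ) * ε) ^ 2
            ≤ (∏ i, π (ω i)) * ((∑ i, Z (ω i)) - k * μ) ^ 2 :=
              mul_le_mul_of_nonneg_left ht3 (hP0 ω)
          _ = (∏ m, π (ω m)) * ((∑ i, Z (ω i)) - k * μ) ^ 2 := rfl
    have hsum : (∑ ω : Fin k → Ω,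
        (if ¬ (|μ - (k : ℝ)⁻¹ * ∑ i, Z (ω i)| ≤ ε) then ∏ i, π (ω i) else 0)) * ((k : ℝ) * ε) ^ 2
          ≤ k * V := by
      rw [Finset.sum_mul]
      exact le_trans (Finset.sum_le_sum fun ω _ => step ω) hsum2
    rw [← le_div_iff₀ hkε] at hsum
    calc ∑ ω : Fin k → Ω,
        (if ¬ (|μ - (k : ℝ)⁻¹ * ∑ i, Z (ω i)| ≤ ε) then ∏ i, π (ω i) else 0)
          ≤ (k * V) / ((k : ℝ) * ε) ^ 2 := hsum
      _ = V / (k * ε ^ 2) := by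
          field_simp
  have hsplit : ∑ ω : Fin k → Ω,
      (if |μ - (k : ℝ)⁻¹ * ∑ i, Z (ω i)| ≤ ε then ∏ i, π (ω i) else 0)
        = 1 - ∑ ω : Fin k → Ω,
          (if ¬ (|μ - (k : ℝ)⁻¹ * ∑ i, Z (ω i)| ≤ ε) then ∏ i, π (ω i) else 0) := by
    rw [← hPsum, ← Finset.sum_sub_distrib]
    refine Finset.sum_congr rfl fun ω _ => ?_
    by_cases h : |μ - (k : ℝ)⁻¹ * ∑ i, Z (ω i)| ≤ ε
    · rw [if_pos h, if_neg (fun h' => h' h)]; ring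
    · rw [if_neg h, if_pos h]; ring
  rw [hsplit]
  linarith [hbad]


open Classical in
/-- Theorem 4.4: sampling `k = ⌈64n/ε²⌉` independent pairs `(x_i, l_i)` where `x_i` is uniform
on `C_n` and `l_i` has independent Bernoulli(p) coordinates, with probability at least `0.9`
the average of `d_{l_i}(x_i, A)` is within `ε` of `Δ(A,p)`. The probability of the event is
written as the sum, over all tuples `ω` of pairs in the event, of the probability
`∏ i, bernWeight p (l_i) / 2^n` of the tuple. -/
theorem stmt6 (p : ℝ) (hp0 : 0 < p) (hp1 : p ≤ 1) {n : ℕ} (hn : 1 ≤ n)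
    (A : Set (Fin n → Bool)) (hA : A.Nonempty)
    (ε : ℝ) (hε : 0 < ε) (k : ℕ) (hk : k = ⌈(64 * n : ℝ) / ε ^ 2⌉₊) :
    (0.9 : ℝ) ≤
      ∑ ω : Fin k → (Fin n → Bool) × (Fin n → Bool),
        if |avgDistP p A - (k : ℝ)⁻¹ * ∑ i : Fin k, (dlToSet (ω i).2 (ω i).1 A : ℝ)| ≤ ε then
          ∏ i : Fin k, bernWeight p (ω i).2 / 2 ^ n
        else 0 := by
  classical
  have hn' : (1 : ℝ) ≤ n := by exact_mod_cast hn
  have hnpos : (0 : ℝ) < n := by linarith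
  have hkpos : 0 < k := by
    rw [hk]
    exact Nat.ceil_pos.2 (div_pos (by positivity) (pow_pos hε 2))
  have hw0' := wB_nonneg (n := n) p hp0 hp1
  have hw1' := wB_sum (n := n) p
  have hbd : bdd (phiF n A) := bdd_phiF A hA
  have hES := efron_stein (wB n p) hw0' hw1' (phiF n A) hbd
  -- mean
  have htrans1 := transfer (n := n) p (fun x l => ((dlToSet l x A : ℕ) : ℝ))
  have hphieq : (fun v : (Fin n ⊕ Fin n) → Bool =>
      ((dlToSet (v ∘ Sum.inr) (v ∘ Sum.inl) A : ℕ) : ℝ)) = phiF n A := rfl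
  rw [hphieq] at htrans1
  have havg : ∑ x : Fin n → Bool, ∑ l : Fin n → Bool,
      (bernWeight p l / 2 ^ n) * ((dlToSet l x A : ℕ) : ℝ) = avgDistP p A := by
    rw [avgDistP, Finset.sum_comm]
    simp only [Fintype.card_fin]
  have hEphi : Ex (wB n p) (phiF n A) = avgDistP p A := by rw [htrans1, havg]
  rw [hEphi] at hES
  -- variance
  have htrans2 := transfer (n := n) p
    (fun x l => (((dlToSet l x A : ℕ) : ℝ) - avgDistP p A) ^ 2)
  have hphieq2 : (fun v : (Fin n ⊕ Fin n) → Bool =>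
      (((dlToSet (v ∘ Sum.inr) (v ∘ Sum.inl) A : ℕ) : ℝ) - avgDistP p A) ^ 2)
      = (fun v => (phiF n A v - avgDistP p A) ^ 2) := rfl
  rw [hphieq2] at htrans2
  have hcard : ((Fintype.card (Fin n ⊕ Fin n) : ℕ) : ℝ) / 4 = (n : ℝ) / 2 := by
    simp only [Fintype.card_sum, Fintype.card_fin]
    push_cast
    ring
  -- cheb hypotheses
  have hπ0 : ∀ a : (Fin n → Bool) × (Fin n → Bool), 0 ≤ bernWeight p a.2 / 2 ^ n := by
    intro a
    apply div_nonneg _ (by positivity)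
    exact mul_nonneg (pow_nonneg hp0.le _) (pow_nonneg (by linarith) _)
  have hπ1 : ∑ a : (Fin n → Bool) × (Fin n → Bool), bernWeight p a.2 / 2 ^ n = 1 := by
    have htr := transfer (n := n) p (fun _ _ => (1 : ℝ))
    have hone : Ex (wB n p) (fun _ => (1 : ℝ)) = 1 := by
      rw [Ex]
      simp only [mul_one]
      exact sum_Wt _ hw1'
    rw [hone] at htr
    rw [Fintype.sum_prod_type]
    calc ∑ x : Fin n → Bool, ∑ l : Fin n → Bool, bernWeight p (x, l).2 / 2 ^ n
        = ∑ x : Fin n → Bool, ∑ l : Fin n → Bool, (bernWeight p l / 2 ^ n) * 1 := by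
          simp
      _ = 1 := htr.symm
  have hμinst : ∑ a : (Fin n → Bool) × (Fin n → Bool),
      (bernWeight p a.2 / 2 ^ n) * ((dlToSet a.2 a.1 A : ℕ) : ℝ) = avgDistP p A := by
    rw [Fintype.sum_prod_type]
    exact havg
  have hVinst : ∑ a : (Fin n → Bool) × (Fin n → Bool),
      (bernWeight p a.2 / 2 ^ n) * (((dlToSet a.2 a.1 A : ℕ) : ℝ) - avgDistP p A) ^ 2
        ≤ (n : ℝ) / 2 := by
    rw [Fintype.sum_prod_type]
    calc ∑ x : Fin n → Bool, ∑ l : Fin n → Bool,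
          (bernWeight p ((x, l) : (Fin n → Bool) × (Fin n → Bool)).2 / 2 ^ n)
            * (((dlToSet ((x, l) : (Fin n → Bool) × (Fin n → Bool)).2
                ((x, l) : (Fin n → Bool) × (Fin n → Bool)).1 A : ℕ) : ℝ) - avgDistP p A) ^ 2
        = Ex (wB n p) (fun v => (phiF n A v - avgDistP p A) ^ 2) := htrans2.symm
      _ ≤ ((Fintype.card (Fin n ⊕ Fin n) : ℕ) : ℝ) / 4 := hES
      _ = (n : ℝ) / 2 := hcard
  -- arithmetic
  have hkge : (64 * n : ℝ) / ε ^ 2 ≤ k := by rw [hk]; exact Nat.le_ceil _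
  have hkeps : 64 * (n : ℝ) ≤ k * ε ^ 2 := by
    have := (div_le_iff₀ (pow_pos hε 2)).1 hkge
    linarith
  have harith : (0.9 : ℝ) ≤ 1 - ((n : ℝ) / 2) / (k * ε ^ 2) := by
    have h64 : (0 : ℝ) < 64 * n := by linarith
    have h1 : ((n : ℝ) / 2) / (k * ε ^ 2) ≤ ((n : ℝ) / 2) / (64 * n) :=
      div_le_div_of_nonneg_left (by linarith) h64 hkeps
    have h2 : ((n : ℝ) / 2) / (64 * n) = 1 / 128 := by
      rw [div_div]
      rw [show (2 : ℝ) * (64 * n) = 128 * n by ring]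
      rw [div_eq_div_iff (by linarith) (by norm_num)]
      ring
    rw [h2] at h1
    linarith
  have hfinal := cheb (fun a : (Fin n → Bool) × (Fin n → Bool) => bernWeight p a.2 / 2 ^ n)
    hπ0 hπ1 (fun a => ((dlToSet a.2 a.1 A : ℕ) : ℝ)) k hkpos ε hε (avgDistP p A)
    ((n : ℝ) / 2) hμinst hVinst (by positivity)
  exact le_trans harith hfinal
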